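/- arXiv:1410.0942 — 2 statements merged into one kernel-verified Lean document; each statement's English description precedes it below -/
import Mathlib

section
/- Let M be a 5-manifold with an SU(2)-structure given by almost contact metric structures (φᵢ, ξ, η, g), i = 1,2,3, with φᵢφⱼ = φₖ = −φⱼφᵢ for even permutations (i,j,k) of (1,2,3), and let ωᵢ(X,Y) = g(φᵢX, Y). Then for any even permutation (i,j,k) of (1,2,3) and all vector fields X, Y, Z: g(N_{φᵢ}(X,Y), φⱼZ) = −dωⱼ(X,Y,Z) + dωⱼ(φᵢX, φᵢY, Z) + dωₖ(φᵢX, Y, Z) + dωₖ(X, φᵢY, Z), where N_{φᵢ} = [φᵢ, φᵢ] + dη ⊗ ξ is the tensor field N_{φᵢ}(X,Y) = φᵢ²[X,Y] + [φᵢX, φᵢY] − φᵢ[φᵢX, Y] − φᵢ[X, φᵢY] + dη(X,Y)ξ. -/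
/-!
An algebraic model of the differential calculus on a (parallelizable) smooth
manifold: `M` is the type of points, `V` is the model for the tangent spaces,
smooth functions are modelled by maps `M → ℝ` and vector fields by maps
`M → V`.  The data consists of the directional derivative `D` of functions,
the Lie bracket `lie` of vector fields, a Riemannian metric `g` and its
Levi-Civita connection `nabla` (characterized, as usual, by being the unique
metric torsion-free connection).
-/

noncomputable section

structure RGeo (M V : Type) [AddCommGroup V] [Module ℝ V] : Type where
  D : (M → V) → (M → ℝ) → (M → ℝ)
  lie : (M → V) → (M → V) → (M → V)
  g : M → V →ₗ[ℝ] V →ₗ[ℝ] ℝ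
  nabla : (M → V) → (M → V) → (M → V)
  g_symm : ∀ x u v, g x u v = g x v u
  g_posdef : ∀ x (v : V), v ≠ 0 → 0 < g x v v
  D_add_fun : ∀ X f₁ f₂, D X (f₁ + f₂) = D X f₁ + D X f₂
  D_mul_fun : ∀ X f₁ f₂, D X (f₁ * f₂) = f₁ * D X f₂ + f₂ * D X f₁
  D_const : ∀ X (c : ℝ), D X (fun _ => c) = 0
  D_add_vf : ∀ X Y f, D (X + Y) f = D X f + D Y f
  D_smul_vf : ∀ (f : M → ℝ) X φ, D (fun x => f x • X x) φ = f * D X φ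
  lie_antisymm : ∀ X Y, lie X Y = -(lie Y X)
  lie_add_left : ∀ X Y Z, lie (X + Y) Z = lie X Z + lie Y Z
  lie_leibniz : ∀ X (f : M → ℝ) Y,
    lie X (fun x => f x • Y x) = fun x => D X f x • Y x + f x • lie X Y x
  D_lie : ∀ X Y f, D (lie X Y) f = D X (D Y f) - D Y (D X f)
  nabla_add_left : ∀ X Y Z, nabla (X + Y) Z = nabla X Z + nabla Y Z
  nabla_smul_left : ∀ (f : M → ℝ) X Y,
    nabla (fun x => f x • X x) Y = fun x => f x • nabla X Y x
  nabla_add_right : ∀ X Y Z, nabla X (Y + Z) = nabla X Y + nabla X Z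
  nabla_leibniz : ∀ X (f : M → ℝ) Y,
    nabla X (fun x => f x • Y x) = fun x => D X f x • Y x + f x • nabla X Y x
  torsion_free : ∀ X Y, (fun x => nabla X Y x - nabla Y X x) = lie X Y
  metric_compat : ∀ X Y Z,
    D X (fun x => g x (Y x) (Z x)) =
      fun x => g x (nabla X Y x) (Z x) + g x (Y x) (nabla X Z x)

namespace RGeo

variable {M V : Type} [AddCommGroup V] [Module ℝ V]

/-- The metric evaluated on two vector fields. -/
def gf (Γ : RGeo M V) (X Y : M → V) : M → ℝ := fun x => Γ.g x (X x) (Y x)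

/-- Application of a `(1,1)`-tensor field to a vector field. -/
def tapp (A : M → V →ₗ[ℝ] V) (X : M → V) : M → V := fun x => A x (X x)

/-- The covariant derivative `(∇_X A) Y` of a `(1,1)`-tensor field `A`. -/
def covDer (Γ : RGeo M V) (A : M → V →ₗ[ℝ] V) (X Y : M → V) : M → V :=
  fun x => Γ.nabla X (tapp A Y) x - A x (Γ.nabla X Y x)

/-- The constant vector field with value `v`. -/
def cst (M : Type) {V : Type} [AddCommGroup V] [Module ℝ V] (v : V) : M → V := fun _ => v

/-- The Riemann curvature operator `R(X,Y)Z`. -/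
def curv (Γ : RGeo M V) (X Y Z : M → V) : M → V :=
  fun x => Γ.nabla X (Γ.nabla Y Z) x - Γ.nabla Y (Γ.nabla X Z) x - Γ.nabla (Γ.lie X Y) Z x

/-- A family of vectors is orthonormal at the point `x`. -/
def OrthonormalAt (Γ : RGeo M V) (x : M) {n : ℕ} (e : Fin n → V) : Prop :=
  ∀ i j, Γ.g x (e i) (e j) = if i = j then (1 : ℝ) else 0

/-- The Ricci tensor at `x`, computed with respect to a frame orthonormal at `x`. -/
def ricciAt (Γ : RGeo M V) (x : M) {n : ℕ} (e : Fin n → V) (u v : V) : ℝ :=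
  ∑ i, Γ.g x (curv Γ (cst M (e i)) (cst M u) (cst M v) x) (e i)

/-- The scalar curvature at `x`, computed with respect to a frame orthonormal at `x`. -/
def scalarAt (Γ : RGeo M V) (x : M) {n : ℕ} (e : Fin n → V) : ℝ :=
  ∑ i, ∑ j, Γ.g x (curv Γ (cst M (e i)) (cst M (e j)) (cst M (e j)) x) (e i)

/-- Exterior derivative of a 1-form (given by its values on vector fields). -/
def dOne (Γ : RGeo M V) (a : (M → V) → M → ℝ) (X Y : M → V) : M → ℝ :=
  Γ.D X (a Y) - Γ.D Y (a X) - a (Γ.lie X Y)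

/-- Exterior derivative of a 2-form (given by its values on vector fields). -/
def dTwo (Γ : RGeo M V) (ω : (M → V) → (M → V) → M → ℝ) (X Y Z : M → V) : M → ℝ :=
  Γ.D X (ω Y Z) - Γ.D Y (ω X Z) + Γ.D Z (ω X Y)
    - ω (Γ.lie X Y) Z + ω (Γ.lie X Z) Y - ω (Γ.lie Y Z) X

/-- Exterior derivative of a 3-form (given by its values on vector fields). -/
def dThree (Γ : RGeo M V) (c : (M → V) → (M → V) → (M → V) → M → ℝ)
    (X Y Z W : M → V) : M → ℝ :=
  Γ.D X (c Y Z W) - Γ.D Y (c X Z W) + Γ.D Z (c X Y W) - Γ.D W (c X Y Z)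
    - c (Γ.lie X Y) Z W + c (Γ.lie X Z) Y W - c (Γ.lie X W) Y Z
    - c (Γ.lie Y Z) X W + c (Γ.lie Y W) X Z - c (Γ.lie Z W) X Y

/-- Wedge product of a 1-form and a 2-form, on vector fields. -/
def w12 (a : (M → V) → M → ℝ) (b : (M → V) → (M → V) → M → ℝ)
    (X Y Z : M → V) : M → ℝ :=
  a X * b Y Z - a Y * b X Z + a Z * b X Y

/-- Wedge product of two 2-forms, on vector fields. -/
def w22 (b c : (M → V) → (M → V) → M → ℝ) (X Y Z W : M → V) : M → ℝ :=
  b X Y * c Z W - b X Z * c Y W + b X W * c Y Z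
    + b Y Z * c X W - b Y W * c X Z + b Z W * c X Y

/-- An almost contact metric structure `(φ, ξ, η, g)`. -/
structure ACMS (Γ : RGeo M V) : Type where
  phi : M → V →ₗ[ℝ] V
  xi : M → V
  eta : M → V →ₗ[ℝ] ℝ
  phi_sq : ∀ x (v : V), phi x (phi x v) = -v + eta x v • xi x
  eta_xi : ∀ x, eta x (xi x) = 1
  metric_phi : ∀ x (u v : V),
    Γ.g x (phi x u) (phi x v) = Γ.g x u v - eta x u * eta x v

variable {Γ : RGeo M V}

/-- `η` evaluated on vector fields. -/
def ACMS.etaf (S : ACMS Γ) : (M → V) → M → ℝ := fun X x => S.eta x (X x)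

/-- `φ` applied to a vector field. -/
def ACMS.phif (S : ACMS Γ) : (M → V) → M → V := fun X x => S.phi x (X x)

/-- The fundamental 2-form `Φ(X,Y) = g(φX, Y)`, on vector fields. -/
def ACMS.omegaf (S : ACMS Γ) : (M → V) → (M → V) → M → ℝ :=
  fun X Y x => Γ.g x (S.phi x (X x)) (Y x)

/-- Nearly Sasakian structure: `(∇_X φ)Y + (∇_Y φ)X = 2g(X,Y)ξ − η(X)Y − η(Y)X`. -/
def ACMS.IsNearlySasakian (S : ACMS Γ) : Prop :=
  ∀ X Y : M → V, ∀ x,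
    covDer Γ S.phi X Y x + covDer Γ S.phi Y X x
      = (2 * Γ.g x (X x) (Y x)) • S.xi x - S.eta x (X x) • Y x - S.eta x (Y x) • X x

/-- Sasakian structure: `(∇_X φ)Y = g(X,Y)ξ − η(Y)X`. -/
def ACMS.IsSasakian (S : ACMS Γ) : Prop :=
  ∀ X Y : M → V, ∀ x,
    covDer Γ S.phi X Y x = Γ.g x (X x) (Y x) • S.xi x - S.eta x (Y x) • X x

/-- Nearly cosymplectic structure: `(∇_X φ)Y + (∇_Y φ)X = 0`. -/
def ACMS.IsNearlyCosymplectic (S : ACMS Γ) : Prop :=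
  ∀ X Y : M → V, ∀ x, covDer Γ S.phi X Y x + covDer Γ S.phi Y X x = 0

/-- coKähler structure: `∇φ = 0`. -/
def ACMS.IsCoKaehler (S : ACMS Γ) : Prop :=
  ∀ X Y : M → V, ∀ x, covDer Γ S.phi X Y x = 0

/-- Nearly α-Sasakian structure. -/
def ACMS.IsNearlyAlphaSasakian (S : ACMS Γ) (α : ℝ) : Prop :=
  ∀ X Y : M → V, ∀ x,
    covDer Γ S.phi X Y x + covDer Γ S.phi Y X x
      = α • ((2 * Γ.g x (X x) (Y x)) • S.xi x - S.eta x (X x) • Y x - S.eta x (Y x) • X x)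

/-- `h` is the tensor of the nearly Sasakian structure `S`: `∇_X ξ = −φX + hX`. -/
def ACMS.IsNSTensor (S : ACMS Γ) (h : M → V →ₗ[ℝ] V) : Prop :=
  ∀ X : M → V, ∀ x, Γ.nabla X S.xi x = -(S.phi x (X x)) + h x (X x)

/-- `h` is the tensor of the nearly cosymplectic structure `S`: `∇_X ξ = hX`. -/
def ACMS.IsNCTensor (S : ACMS Γ) (h : M → V →ₗ[ℝ] V) : Prop :=
  ∀ X : M → V, ∀ x, Γ.nabla X S.xi x = h x (X x)

/-- A vector field is a section of a distribution. -/
def Sect (Dst : M → Submodule ℝ V) (X : M → V) : Prop := ∀ x, X x ∈ Dst x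

/-- A distribution is integrable (involutive). -/
def IsIntegrable (Γ : RGeo M V) (Dst : M → Submodule ℝ V) : Prop :=
  ∀ X Y, Sect Dst X → Sect Dst Y → Sect Dst (Γ.lie X Y)

/-- A distribution defines a totally geodesic foliation: it is closed under
covariant differentiation along its own sections. -/
def IsTotallyGeodesic (Γ : RGeo M V) (Dst : M → Submodule ℝ V) : Prop :=
  ∀ X Y, Sect Dst X → Sect Dst Y → Sect Dst (Γ.nabla X Y)

/-- The eigendistribution of `h²` for the eigenvalue `μ`. -/
def eigD (h : M → V →ₗ[ℝ] V) (μ : ℝ) : M → Submodule ℝ V :=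
  fun x => Module.End.eigenspace (h x ∘ₗ h x) μ

/-- `(i,j,k)` is an even permutation of `(1,2,3)` (here of `(0,1,2)`). -/
def EvenPerm (i j k : Fin 3) : Prop :=
  (i, j, k) = (0, 1, 2) ∨ (i, j, k) = (1, 2, 0) ∨ (i, j, k) = (2, 0, 1)

/-- An `SU(2)`-structure on a 5-manifold, described by three almost contact
metric structures sharing `ξ`, `η`, `g` and satisfying the quaternionic
relations `φᵢφⱼ = φₖ = −φⱼφᵢ` for even permutations `(i,j,k)`. -/
structure SU2Triple (Γ : RGeo M V) : Type where
  S : Fin 3 → ACMS Γ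
  same_xi : ∀ i j, (S i).xi = (S j).xi
  same_eta : ∀ i j, (S i).eta = (S j).eta
  quat : ∀ i j k, EvenPerm i j k → ∀ x (v : V),
    (S i).phi x ((S j).phi x v) = (S k).phi x v ∧
    (S j).phi x ((S i).phi x v) = -((S k).phi x v)

/-- The tensor field `N_φ = [φ,φ] + dη ⊗ ξ`. -/
def nijenhuis (Γ : RGeo M V) (A : M → V →ₗ[ℝ] V) (eta : M → V →ₗ[ℝ] ℝ) (xi : M → V)
    (X Y : M → V) : M → V :=
  fun x => A x (A x (Γ.lie X Y x)) + Γ.lie (tapp A X) (tapp A Y) x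
    - A x (Γ.lie (tapp A X) Y x) - A x (Γ.lie X (tapp A Y) x)
    + dOne Γ (fun Z y => eta y (Z y)) X Y x • xi x

/-- Pointwise wedge product of two 2-forms on `V`, evaluated on four vectors. -/
def wedge22At (b c : V →ₗ[ℝ] V →ₗ[ℝ] ℝ) (p q r s : V) : ℝ :=
  b p q * c r s - b p r * c q s + b p s * c q r
    + b q r * c p s - b q s * c p r + b r s * c p q

/-- Pointwise wedge product of a 4-form and a 1-form on `V`, on five vectors. -/
def wedge41At (v4 : V → V → V → V → ℝ) (a : V →ₗ[ℝ] ℝ) (p q r s t : V) : ℝ :=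
  a p * v4 q r s t - a q * v4 p r s t + a r * v4 p q s t
    - a s * v4 p q r t + a t * v4 p q r s

end RGeo

/-- The data `(η, ω₁, ω₂, ω₃)` of a candidate `SU(2)`-structure on a 5-manifold:
a 1-form and three 2-forms (given pointwise). -/
structure SU2Forms (M V : Type) [AddCommGroup V] [Module ℝ V] : Type where
  eta : M → V →ₗ[ℝ] ℝ
  omega : Fin 3 → M → V →ₗ[ℝ] V →ₗ[ℝ] ℝ
  omega_alt : ∀ i x v, omega i x v v = 0

namespace SU2Forms

variable {M V : Type} [AddCommGroup V] [Module ℝ V]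

/-- `(η, ω₁, ω₂, ω₃)` is an `SU(2)`-structure: `ωᵢ ∧ ωⱼ = δᵢⱼ v` for a 4-form
`v` with `v ∧ η ≠ 0`, and `X⌟ω₁ = Y⌟ω₂` implies `ω₃(X,Y) ≥ 0`. -/
def IsSU2 (F : SU2Forms M V) : Prop :=
  (∃ v4 : M → V → V → V → V → ℝ,
    (∀ i j x p q r s, RGeo.wedge22At (F.omega i x) (F.omega j x) p q r s
        = (if i = j then (1 : ℝ) else 0) * v4 x p q r s) ∧
    (∀ x, ∃ p q r s t, RGeo.wedge41At (v4 x) (F.eta x) p q r s t ≠ 0)) ∧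
  (∀ x (u w : V), (∀ z, F.omega 0 x u z = F.omega 1 x w z) → 0 ≤ F.omega 2 x u w)

/-- `η` evaluated on vector fields. -/
def etaf (F : SU2Forms M V) : (M → V) → M → ℝ := fun X x => F.eta x (X x)

/-- `ωᵢ` evaluated on vector fields. -/
def omegaf (F : SU2Forms M V) (i : Fin 3) : (M → V) → (M → V) → M → ℝ :=
  fun X Y x => F.omega i x (X x) (Y x)

end SU2Forms

namespace RGeo

variable {M V : Type} [AddCommGroup V] [Module ℝ V]

/-- A linear connection on `(M, V, Γ)`. -/
structure ConnOf (Γ : RGeo M V) : Type where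
  nb : (M → V) → (M → V) → (M → V)
  nb_add_left : ∀ X Y Z, nb (X + Y) Z = nb X Z + nb Y Z
  nb_smul_left : ∀ (f : M → ℝ) X Y, nb (fun x => f x • X x) Y = fun x => f x • nb X Y x
  nb_add_right : ∀ X Y Z, nb X (Y + Z) = nb X Y + nb X Z
  nb_leibniz : ∀ X (f : M → ℝ) Y,
    nb X (fun x => f x • Y x) = fun x => Γ.D X f x • Y x + f x • nb X Y x

/-- The torsion of a linear connection. -/
def ConnOf.tors {Γ : RGeo M V} (C : ConnOf Γ) (X Y : M → V) : M → V :=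
  fun x => C.nb X Y x - C.nb Y X x - Γ.lie X Y x

/-- The connection parallelizes all the structure tensors `g`, `ξ`, `φ`, `η`. -/
def ConnOf.Parallelizes {Γ : RGeo M V} (C : ConnOf Γ) (S : ACMS Γ) : Prop :=
  (∀ X Y Z, Γ.D X (Γ.gf Y Z)
      = fun x => Γ.g x (C.nb X Y x) (Z x) + Γ.g x (Y x) (C.nb X Z x)) ∧
  (∀ X x, C.nb X S.xi x = 0) ∧
  (∀ X Y x, C.nb X (tapp S.phi Y) x = S.phi x (C.nb X Y x)) ∧
  (∀ X Y, Γ.D X (S.etaf Y) = fun x => S.eta x (C.nb X Y x))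

end RGeo

section AuxLemmas

namespace RGeo

variable {M V : Type} [AddCommGroup V] [Module ℝ V] {Γ : RGeo M V}

lemma tapp_apply' (A : M → V →ₗ[ℝ] V) (W : M → V) (y : M) :
    tapp A W y = A y (W y) := rfl

lemma ACMS.phi_xi_zero (S : ACMS Γ) (x : M) : S.phi x (S.xi x) = 0 := by
  have h2 : S.phi x (S.phi x (S.xi x)) = 0 := by
    rw [S.phi_sq, S.eta_xi, one_smul]; abel
  have h3 : S.phi x (S.phi x (S.phi x (S.xi x)))
      = -(S.phi x (S.xi x)) + S.eta x (S.phi x (S.xi x)) • S.xi x := S.phi_sq x _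
  rw [h2, map_zero] at h3
  have h6 : S.phi x (S.xi x) = S.eta x (S.phi x (S.xi x)) • S.xi x := by
    have h := h3.symm
    rw [neg_add_eq_sub, sub_eq_zero] at h
    exact h.symm
  set c := S.eta x (S.phi x (S.xi x)) with hc
  have h7 : S.phi x (S.phi x (S.xi x)) = (c * c) • S.xi x := by
    rw [h6, map_smul, h6, smul_smul]
  rw [h2] at h7
  have h8 : c * c = 0 := by
    have := congrArg (S.eta x) h7.symm
    simpa [map_smul, S.eta_xi] using this
  have h9 : c = 0 := mul_self_eq_zero.mp h8
  rw [h6, h9, zero_smul]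

lemma ACMS.eta_phi (S : ACMS Γ) (x : M) (v : V) : S.eta x (S.phi x v) = 0 := by
  have h1 : S.phi x (S.phi x (S.phi x v))
      = -(S.phi x v) + S.eta x (S.phi x v) • S.xi x := S.phi_sq x _
  have h2 : S.phi x (S.phi x (S.phi x v)) = -(S.phi x v) := by
    rw [S.phi_sq x v]
    simp [map_add, map_neg, map_smul, S.phi_xi_zero]
  rw [h2] at h1
  have h3 : S.eta x (S.phi x v) • S.xi x = 0 := by
    have := h1.symm
    rwa [add_eq_left] at this
  have := congrArg (S.eta x) h3
  simpa [map_smul, S.eta_xi] using this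

lemma ACMS.g_xi (S : ACMS Γ) (x : M) (v : V) : Γ.g x (S.xi x) v = S.eta x v := by
  have h := S.metric_phi x (S.xi x) v
  rw [S.phi_xi_zero, S.eta_xi, one_mul] at h
  simp only [map_zero, LinearMap.zero_apply] at h
  linarith

lemma ACMS.g_phi_skew (S : ACMS Γ) (x : M) (u v : V) :
    Γ.g x (S.phi x u) v = -Γ.g x u (S.phi x v) := by
  have h := S.metric_phi x (S.phi x u) v
  rw [S.eta_phi, zero_mul, sub_zero, S.phi_sq] at h
  simp only [map_add, map_neg, map_smul, LinearMap.add_apply, LinearMap.neg_apply,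
    LinearMap.smul_apply, smul_eq_mul] at h
  rw [S.g_xi, S.eta_phi, mul_zero, add_zero] at h
  linarith

lemma nabla_zero (U : M → V) : Γ.nabla U (fun _ => (0:V)) = fun _ => (0:V) := by
  have h := Γ.nabla_leibniz U (fun _ => (0:ℝ)) U
  simp only [zero_smul] at h
  funext y
  have h' := congrFun h y
  simpa [Γ.D_const] using h'

lemma nabla_comb (U : M → V) (f h : M → ℝ) (W W' : M → V) (x : M) :
    Γ.nabla U (fun y => f y • W y + h y • W' y) x
      = Γ.D U f x • W x + f x • Γ.nabla U W x + Γ.D U h x • W' x + h x • Γ.nabla U W' x := by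
  have e : (fun y => f y • W y + h y • W' y)
      = (fun y => f y • W y) + (fun y => h y • W' y) := rfl
  rw [e, Γ.nabla_add_right]
  have h1 := congrFun (Γ.nabla_leibniz U f W) x
  have h2 := congrFun (Γ.nabla_leibniz U h W') x
  simp only [Pi.add_apply]
  rw [h1, h2]; abel

lemma covDer_comb (A : M → V →ₗ[ℝ] V) (U : M → V) (f h : M → ℝ) (W W' : M → V) (x : M) :
    covDer Γ A U (fun y => f y • W y + h y • W' y) x
      = f x • covDer Γ A U W x + h x • covDer Γ A U W' x := by
  have e : tapp A (fun y => f y • W y + h y • W' y)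
      = fun y => f y • tapp A W y + h y • tapp A W' y := by
    funext y; simp [tapp]
  simp only [covDer]
  rw [e, nabla_comb, nabla_comb]
  simp only [map_add, map_smul, tapp_apply']
  module

lemma covDer_comp (A B C : M → V →ₗ[ℝ] V)
    (hc : ∀ y v, C y v = A y (B y v)) (U W : M → V) (x : M) :
    covDer Γ C U W x = covDer Γ A U (tapp B W) x + A x (covDer Γ B U W x) := by
  have e : tapp C W = tapp A (tapp B W) := funext fun y => hc y (W y)
  simp only [covDer, e, hc, map_sub, tapp_apply']
  abel

lemma covDer_negcomp (A B C : M → V →ₗ[ℝ] V)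
    (hc : ∀ y v, C y v = -(A y (B y v))) (U W : M → V) (x : M) :
    covDer Γ C U W x = -covDer Γ A U (tapp B W) x - A x (covDer Γ B U W x) := by
  have e : tapp C W = fun y => (-1:ℝ) • tapp A (tapp B W) y := by
    funext y; simp [tapp, hc y (W y)]
  have hn : Γ.nabla U (tapp C W) x = (-1:ℝ) • Γ.nabla U (tapp A (tapp B W)) x := by
    rw [e]
    have h := congrFun (Γ.nabla_leibniz U (fun _ => (-1:ℝ)) (tapp A (tapp B W))) x
    simpa [Γ.D_const] using h
  simp only [covDer, hn, hc, map_sub, map_neg, neg_one_smul, tapp_apply']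
  abel

lemma ACMS.covDer_xi (S : ACMS Γ) (U : M → V) (x : M) :
    covDer Γ S.phi U S.xi x = -(S.phi x (Γ.nabla U S.xi x)) := by
  have e : tapp S.phi S.xi = fun _ => (0:V) := funext fun y => S.phi_xi_zero y
  simp only [covDer, e, nabla_zero]
  simp

lemma ACMS.covDer_phi_sq (S : ACMS Γ) (U X : M → V) (x : M) :
    covDer Γ S.phi U (tapp S.phi X) x
      = -(S.phi x (covDer Γ S.phi U X x))
        + (Γ.D U (fun y => S.eta y (X y)) x - S.eta x (Γ.nabla U X x)) • S.xi x
        + S.eta x (X x) • Γ.nabla U S.xi x := by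
  have e : tapp S.phi (tapp S.phi X)
      = fun y => (-1:ℝ) • X y + (S.eta y (X y)) • S.xi y := by
    funext y
    rw [tapp_apply', tapp_apply', S.phi_sq, neg_one_smul]
  have w1 : Γ.nabla U (tapp S.phi (tapp S.phi X)) x
      = covDer Γ S.phi U (tapp S.phi X) x + S.phi x (covDer Γ S.phi U X x)
        + S.phi x (S.phi x (Γ.nabla U X x)) := by
    simp only [covDer, map_sub]
    abel
  have w2 : Γ.nabla U (tapp S.phi (tapp S.phi X)) x
      = Γ.D U (fun _ => (-1:ℝ)) x • X x + (-1:ℝ) • Γ.nabla U X x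
        + Γ.D U (fun y => S.eta y (X y)) x • S.xi x + S.eta x (X x) • Γ.nabla U S.xi x := by
    rw [e]
    exact nabla_comb U (fun _ => (-1:ℝ)) (fun y => S.eta y (X y)) X S.xi x
  have hD : Γ.D U (fun _ => (-1:ℝ)) x = 0 := by rw [Γ.D_const]; rfl
  have hphi2 : S.phi x (S.phi x (Γ.nabla U X x))
      = -(Γ.nabla U X x) + S.eta x (Γ.nabla U X x) • S.xi x := S.phi_sq x _
  rw [w2, hphi2, hD] at w1
  linear_combination (norm := module) -w1

lemma ACMS.dTwo_eq (S : ACMS Γ) (X Y Z : M → V) (x : M) :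
    dTwo Γ S.omegaf X Y Z x
      = Γ.g x (covDer Γ S.phi X Y x) (Z x) - Γ.g x (covDer Γ S.phi Y X x) (Z x)
        + Γ.g x (covDer Γ S.phi Z X x) (Y x) := by
  have hDc : ∀ U P Q : M → V, Γ.D U (S.omegaf P Q) x
      = Γ.g x (Γ.nabla U (tapp S.phi P) x) (Q x)
        + Γ.g x (tapp S.phi P x) (Γ.nabla U Q x) := by
    intro U P Q
    exact congrFun (Γ.metric_compat U (tapp S.phi P) Q) x
  have hlie : ∀ P Q : M → V, Γ.lie P Q x = Γ.nabla P Q x - Γ.nabla Q P x :=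
    fun P Q => (congrFun (Γ.torsion_free P Q) x).symm
  have homega : ∀ (P Q : M → V), S.omegaf P Q x = Γ.g x (S.phi x (P x)) (Q x) :=
    fun _ _ => rfl
  simp only [dTwo, Pi.add_apply, Pi.sub_apply]
  rw [hDc X Y Z, hDc Y X Z, hDc Z X Y]
  simp only [homega, hlie, covDer, map_sub, LinearMap.sub_apply, tapp_apply']
  have s1 := S.g_phi_skew x (Γ.nabla X Z x) (Y x)
  have s2 := S.g_phi_skew x (Γ.nabla Y Z x) (X x)
  have s3 := S.g_phi_skew x (Γ.nabla Z Y x) (X x)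
  have u1 := Γ.g_symm x (S.phi x (Y x)) (Γ.nabla X Z x)
  have u2 := Γ.g_symm x (S.phi x (X x)) (Γ.nabla Y Z x)
  have u3 := Γ.g_symm x (S.phi x (X x)) (Γ.nabla Z Y x)
  linarith

lemma ACMS.nijenhuis_eq (S : ACMS Γ) (X Y : M → V) (x : M) :
    nijenhuis Γ S.phi S.eta S.xi X Y x
      = covDer Γ S.phi (tapp S.phi X) Y x - covDer Γ S.phi (tapp S.phi Y) X x
        + S.phi x (covDer Γ S.phi Y X x) - S.phi x (covDer Γ S.phi X Y x)
        + dOne Γ (fun Z y => S.eta y (Z y)) X Y x • S.xi x := by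
  have hl : ∀ P Q : M → V, Γ.lie P Q x = Γ.nabla P Q x - Γ.nabla Q P x :=
    fun P Q => (congrFun (Γ.torsion_free P Q) x).symm
  simp only [nijenhuis, covDer, hl, map_sub]
  abel

lemma evenPerm_rot {i j k : Fin 3} (h : EvenPerm i j k) : EvenPerm j k i := by
  rcases h with h | h | h <;> simp_all [EvenPerm, Prod.ext_iff]

end RGeo

end AuxLemmas

open RGeo in
/-- Lemma.  On a 5-manifold with an `SU(2)`-structure, for any
even permutation `(i,j,k)`:
`g(N_{φᵢ}(X,Y), φⱼZ) = −dωⱼ(X,Y,Z) + dωⱼ(φᵢX,φᵢY,Z) + dωₖ(φᵢX,Y,Z) + dωₖ(X,φᵢY,Z)`. -/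
theorem nijenhuis_formula_SU2 {M V : Type} [AddCommGroup V] [Module ℝ V]
    [FiniteDimensional ℝ V] (hdim : Module.finrank ℝ V = 5)
    (Γ : RGeo M V) (T : SU2Triple Γ)
    (i j k : Fin 3) (hperm : EvenPerm i j k)
    (X Y Z : M → V) (x : M) :
    Γ.g x (nijenhuis Γ (T.S i).phi (T.S i).eta (T.S i).xi X Y x) ((T.S j).phi x (Z x))
      = -(dTwo Γ (T.S j).omegaf X Y Z x)
        + dTwo Γ (T.S j).omegaf (tapp (T.S i).phi X) (tapp (T.S i).phi Y) Z x
        + dTwo Γ (T.S k).omegaf (tapp (T.S i).phi X) Y Z x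
        + dTwo Γ (T.S k).omegaf X (tapp (T.S i).phi Y) Z x := by
  have hperm2 : EvenPerm j k i := evenPerm_rot hperm
  have hperm3 : EvenPerm k i j := evenPerm_rot hperm2
  have hij : ∀ y v, (T.S i).phi y ((T.S j).phi y v) = (T.S k).phi y v :=
    fun y v => (T.quat i j k hperm y v).1
  have hji : ∀ y (v : V), (T.S j).phi y ((T.S i).phi y v) = -((T.S k).phi y v) :=
    fun y v => (T.quat i j k hperm y v).2
  have hki : ∀ y v, (T.S k).phi y ((T.S i).phi y v) = (T.S j).phi y v :=
    fun y v => (T.quat k i j hperm3 y v).1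
  -- relations between covariant derivatives
  have Rb : ∀ (U W : M → V) (y : M), covDer Γ (T.S j).phi U W y
      = covDer Γ (T.S k).phi U (tapp (T.S i).phi W) y
        + (T.S k).phi y (covDer Γ (T.S i).phi U W y) :=
    fun U W y => covDer_comp _ _ _ (fun y v => (hki y v).symm) U W y
  have Rg : ∀ (U W : M → V) (y : M), covDer Γ (T.S k).phi U W y
      = -covDer Γ (T.S j).phi U (tapp (T.S i).phi W) y
        - (T.S j).phi y (covDer Γ (T.S i).phi U W y) :=
    fun U W y => covDer_negcomp _ _ _ (fun y v => by rw [hji y v, neg_neg]) U W y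
  -- direction identities
  have J1 : ∀ (U P : M → V), Γ.g x (covDer Γ (T.S i).phi U P x) ((T.S k).phi x (Z x))
      = -Γ.g x (covDer Γ (T.S j).phi U P x) (Z x)
        + Γ.g x (covDer Γ (T.S k).phi U (tapp (T.S i).phi P) x) (Z x) := by
    intro U P
    have h1 := (T.S k).g_phi_skew x (covDer Γ (T.S i).phi U P x) (Z x)
    rw [Rb U P x]
    simp only [map_add, LinearMap.add_apply]
    linarith
  have J2 : ∀ (U P : M → V), Γ.g x (covDer Γ (T.S i).phi U P x) ((T.S j).phi x (Z x))
      = Γ.g x (covDer Γ (T.S j).phi U (tapp (T.S i).phi P) x) (Z x)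
        + Γ.g x (covDer Γ (T.S k).phi U P x) (Z x) := by
    intro U P
    have h1 := (T.S j).g_phi_skew x (covDer Γ (T.S i).phi U P x) (Z x)
    rw [Rg U P x]
    simp only [map_sub, map_neg, LinearMap.sub_apply, LinearMap.neg_apply]
    linarith
  have key1 : ∀ (U P : M → V), covDer Γ (T.S k).phi U (tapp (T.S i).phi P) x
      = covDer Γ (T.S j).phi U P x - (T.S k).phi x (covDer Γ (T.S i).phi U P x) := by
    intro U P
    rw [Rg U (tapp (T.S i).phi P) x]
    have e : tapp (T.S i).phi (tapp (T.S i).phi P)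
        = fun y => (-1:ℝ) • P y + ((T.S i).eta y (P y)) • (T.S i).xi y := by
      funext y
      rw [tapp_apply', tapp_apply', (T.S i).phi_sq, neg_one_smul]
    have hb : covDer Γ (T.S j).phi U (tapp (T.S i).phi (tapp (T.S i).phi P)) x
        = (-1:ℝ) • covDer Γ (T.S j).phi U P x
          + ((T.S i).eta x (P x)) • covDer Γ (T.S j).phi U (T.S i).xi x := by
      rw [e]
      exact covDer_comb (T.S j).phi U (fun _ => (-1:ℝ)) (fun y => (T.S i).eta y (P y))
        P (T.S i).xi x
    have hxi : covDer Γ (T.S j).phi U (T.S i).xi x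
        = -((T.S j).phi x (Γ.nabla U (T.S i).xi x)) := by
      rw [T.same_xi i j]
      exact (T.S j).covDer_xi U x
    have hps := (T.S i).covDer_phi_sq U P x
    have hpsix : (T.S j).phi x ((T.S i).xi x) = 0 := by
      rw [T.same_xi i j]; exact (T.S j).phi_xi_zero x
    rw [hb, hxi, hps]
    simp only [map_add, map_neg, map_smul, neg_one_smul, hji, hpsix, smul_zero, smul_neg]
    module
  have J3 : (0:ℝ)
      = -Γ.g x (covDer Γ (T.S j).phi Z X x) (Y x)
        + Γ.g x (covDer Γ (T.S j).phi Z (tapp (T.S i).phi X) x) ((T.S i).phi x (Y x))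
        + Γ.g x (covDer Γ (T.S k).phi Z (tapp (T.S i).phi X) x) (Y x)
        + Γ.g x (covDer Γ (T.S k).phi Z X x) ((T.S i).phi x (Y x)) := by
    have k1 := key1 Z X
    have g1 := Rg Z X x
    rw [k1, g1]
    have s1 := (T.S j).g_phi_skew x (covDer Γ (T.S i).phi Z X x) ((T.S i).phi x (Y x))
    rw [hji x (Y x)] at s1
    simp only [map_neg] at s1
    have s3 := (T.S k).g_phi_skew x (covDer Γ (T.S i).phi Z X x) (Y x)
    simp only [map_sub, map_neg, LinearMap.sub_apply, LinearMap.neg_apply]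
    linarith
  have hxiz : Γ.g x ((T.S i).xi x) ((T.S j).phi x (Z x)) = 0 := by
    rw [T.same_xi i j, (T.S j).g_xi, (T.S j).eta_phi]
  have hc : ∀ a : V, Γ.g x ((T.S i).phi x a) ((T.S j).phi x (Z x))
      = -Γ.g x a ((T.S k).phi x (Z x)) := by
    intro a
    rw [(T.S i).g_phi_skew x a ((T.S j).phi x (Z x)), hij x (Z x)]
  rw [(T.S i).nijenhuis_eq X Y x,
    (T.S j).dTwo_eq X Y Z x,
    (T.S j).dTwo_eq (tapp (T.S i).phi X) (tapp (T.S i).phi Y) Z x,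
    (T.S k).dTwo_eq (tapp (T.S i).phi X) Y Z x,
    (T.S k).dTwo_eq X (tapp (T.S i).phi Y) Z x]
  simp only [map_add, map_sub, map_smul, LinearMap.add_apply, LinearMap.sub_apply,
    LinearMap.smul_apply, smul_eq_mul, tapp_apply']
  rw [hxiz, mul_zero]
  linear_combination (J2 (tapp (T.S i).phi X) Y) - (J2 (tapp (T.S i).phi Y) X)
    + (J1 X Y) - (J1 Y X) + J3
    + hc (covDer Γ (T.S i).phi Y X x) - hc (covDer Γ (T.S i).phi X Y x)
end
end

section
/- Let (M, φ, ξ, η, g) be a nearly Sasakian manifold of dimension 2n+1. Then η ∧ (dη)ⁿ is nowhere vanishing on M, i.e. η is a contact form and M is a contact manifold. -/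
/-!
An algebraic model of the differential calculus on a (parallelizable) smooth
manifold: `M` is the type of points, `V` is the model for the tangent spaces,
smooth functions are modelled by maps `M → ℝ` and vector fields by maps
`M → V`.  The data consists of the directional derivative `D` of functions,
the Lie bracket `lie` of vector fields, a Riemannian metric `g` and its
Levi-Civita connection `nabla` (characterized, as usual, by being the unique
metric torsion-free connection).
-/

noncomputable section

section NSgeo
open RGeo

variable {M V : Type} [AddCommGroup V] [Module ℝ V] {Γ : RGeo M V} (S : ACMS Γ)

private lemma D_fun_zero (X : M → V) : Γ.D X (fun _ => (0:ℝ)) = 0 := Γ.D_const X 0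

private lemma D_add_zero {f₁ f₂ : M → ℝ} (X : M → V) (h : f₁ + f₂ = fun _ => (0:ℝ)) (y : M) :
    Γ.D X f₁ y + Γ.D X f₂ y = 0 := by
  have h1 := Γ.D_add_fun X f₁ f₂
  rw [h, D_fun_zero] at h1
  simpa using (congrFun h1 y).symm

private lemma nabla_zero_vf (X : M → V) : Γ.nabla X (fun _ => (0:V)) = 0 := by
  have h := Γ.nabla_leibniz X (fun _ => (0:ℝ)) (fun _ => (0:V))
  simp only [zero_smul, smul_zero, add_zero] at h
  exact h

private lemma nabla_smul_const (c : ℝ) (X Y : M → V) :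
    Γ.nabla X (fun y => c • Y y) = fun y => c • Γ.nabla X Y y := by
  rw [Γ.nabla_leibniz X (fun _ => c) Y]
  funext y
  rw [Γ.D_const]
  simp

private lemma phi_xi_zero (y : M) : S.phi y (S.xi y) = 0 := by
  have h2 : S.phi y (S.phi y (S.xi y)) = 0 := by
    rw [S.phi_sq, S.eta_xi]; simp
  have h4 : S.phi y (S.phi y (S.phi y (S.xi y)))
      = -(S.phi y (S.xi y)) + S.eta y (S.phi y (S.xi y)) • S.xi y := S.phi_sq y (S.phi y (S.xi y))
  rw [h2, map_zero] at h4
  have h5 : S.phi y (S.xi y) = S.eta y (S.phi y (S.xi y)) • S.xi y :=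
    neg_add_eq_zero.mp h4.symm
  by_cases hc : S.eta y (S.phi y (S.xi y)) = 0
  · rw [h5, hc, zero_smul]
  · exfalso
    have h6 : S.eta y (S.phi y (S.xi y)) • S.phi y (S.xi y) = 0 := by
      have := congrArg (S.phi y) h5
      rw [h2, map_smul] at this
      exact this.symm
    have h7 : S.phi y (S.xi y) = 0 := by
      have := congrArg (fun v => (S.eta y (S.phi y (S.xi y)))⁻¹ • v) h6
      simpa [smul_smul, inv_mul_cancel₀ hc] using this
    have h9 : S.eta y (S.phi y (S.xi y)) • S.xi y = 0 := by rw [← h5, h7]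
    have h8 : S.xi y = 0 := by
      have := congrArg (fun v => (S.eta y (S.phi y (S.xi y)))⁻¹ • v) h9
      simpa [smul_smul, inv_mul_cancel₀ hc] using this
    have h10 := S.eta_xi y
    rw [h8, map_zero] at h10
    exact zero_ne_one h10

private lemma g_xi (y : M) (v : V) : Γ.g y (S.xi y) v = S.eta y v := by
  have h := S.metric_phi y (S.xi y) v
  rw [phi_xi_zero, map_zero, LinearMap.zero_apply, S.eta_xi, one_mul] at h
  linarith

private lemma eta_phi (y : M) (v : V) : S.eta y (S.phi y v) = 0 := by
  have h1 : S.phi y (S.phi y (S.phi y v))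
      = -(S.phi y v) + S.eta y (S.phi y v) • S.xi y := S.phi_sq y (S.phi y v)
  have h2 : S.phi y (S.phi y (S.phi y v)) = -(S.phi y v) := by
    rw [S.phi_sq y v, map_add, map_neg, map_smul, phi_xi_zero]
    simp
  rw [h2] at h1
  have h3 : S.eta y (S.phi y v) • S.xi y = 0 := by
    have h1' : -(S.phi y v) + S.eta y (S.phi y v) • S.xi y = -(S.phi y v) + 0 := by
      rw [add_zero]; exact h1.symm
    exact add_left_cancel h1'
  have := congrArg (S.eta y) h3
  rw [map_smul, map_zero, S.eta_xi] at this
  simpa using this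

private lemma phi_skew (y : M) (u v : V) :
    Γ.g y (S.phi y u) v = -(Γ.g y u (S.phi y v)) := by
  have h := S.metric_phi y u (S.phi y v)
  rw [eta_phi] at h
  have h2 : S.phi y (S.phi y v) = -v + S.eta y v • S.xi y := S.phi_sq y v
  rw [h2, map_add, map_neg, map_smul] at h
  have h3 : Γ.g y (S.phi y u) (S.xi y) = 0 := by
    rw [Γ.g_symm, g_xi, eta_phi]
  rw [h3] at h
  simp at h
  linarith

private lemma eta_nabla_xi (X : M → V) (y : M) : S.eta y (Γ.nabla X S.xi y) = 0 := by
  have hconst : (fun z => Γ.g z (S.xi z) (S.xi z)) = fun _ => (1:ℝ) := by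
    funext z; rw [g_xi, S.eta_xi]
  have h := Γ.metric_compat X S.xi S.xi
  rw [hconst, Γ.D_const] at h
  have h2 := congrFun h.symm y
  simp at h2
  rw [Γ.g_symm y (Γ.nabla X S.xi y) (S.xi y), g_xi] at h2
  linarith

private lemma tapp_phi_xi : tapp S.phi S.xi = fun _ => (0:V) := by
  funext y; simp [tapp, phi_xi_zero]

private lemma covDer_into_xi (X : M → V) (y : M) :
    covDer Γ S.phi X S.xi y = -(S.phi y (Γ.nabla X S.xi y)) := by
  unfold covDer
  rw [tapp_phi_xi, nabla_zero_vf]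
  simp

end NSgeo
section NSgeo2
open RGeo

variable {M V : Type} [AddCommGroup V] [Module ℝ V] {Γ : RGeo M V} (S : ACMS Γ)

private lemma covDer_skew (Z X Y : M → V) (y : M) :
    Γ.g y (covDer Γ S.phi Z X y) (Y y) + Γ.g y (X y) (covDer Γ S.phi Z Y y) = 0 := by
  have h1 := congrFun (Γ.metric_compat Z (tapp S.phi X) Y) y
  have h2 := congrFun (Γ.metric_compat Z X (tapp S.phi Y)) y
  have hzero : (fun z => Γ.g z (tapp S.phi X z) (Y z)) + (fun z => Γ.g z (X z) (tapp S.phi Y z))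
      = fun _ => (0:ℝ) := by
    funext z
    simp only [Pi.add_apply, tapp]
    rw [phi_skew]
    ring
  have hD := D_add_zero (Γ := Γ) Z hzero y
  simp only [covDer, map_sub, LinearMap.sub_apply]
  have hs1 : Γ.g y (tapp S.phi X y) (Γ.nabla Z Y y) = -(Γ.g y (X y) (S.phi y (Γ.nabla Z Y y))) := by
    simp only [tapp]; rw [phi_skew]
  have hs2 : Γ.g y (S.phi y (Γ.nabla Z X y)) (Y y) = -(Γ.g y (Γ.nabla Z X y) (S.phi y (Y y))) := by
    rw [phi_skew]
  have hs3 : Γ.g y (Γ.nabla Z X y) (tapp S.phi Y y) = Γ.g y (Γ.nabla Z X y) (S.phi y (Y y)) := by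
    simp only [tapp]
  rw [hs3] at h2
  linarith [h1, h2, hD, hs1, hs2]

variable (hNS : S.IsNearlySasakian)
include hNS

private lemma nabla_xi_xi (y : M) : Γ.nabla S.xi S.xi y = 0 := by
  have h := hNS S.xi S.xi y
  rw [covDer_into_xi] at h
  rw [g_xi, S.eta_xi] at h
  -- h : -(φ ∇) + -(φ ∇) = (2*1) • ξ - 1 • ξ - 1 • ξ
  have hphi : S.phi y (Γ.nabla S.xi S.xi y) = 0 := by
    have h2 : (0:V) = -(S.phi y (Γ.nabla S.xi S.xi y)) + -(S.phi y (Γ.nabla S.xi S.xi y)) := by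
      rw [h]
      module
    have h3 : S.phi y (Γ.nabla S.xi S.xi y)
        = (-(1:ℝ)/2) • (-(S.phi y (Γ.nabla S.xi S.xi y)) + -(S.phi y (Γ.nabla S.xi S.xi y))) := by
      module
    rw [← h2] at h3
    simpa using h3
  have h4 := S.phi_sq y (Γ.nabla S.xi S.xi y)
  rw [hphi, map_zero, eta_nabla_xi, zero_smul, add_zero] at h4
  -- h4 : 0 = -(∇ξξ)
  simpa using h4.symm

private lemma covDer_xi_phi (Y : M → V) (y : M) :
    covDer Γ S.phi S.xi (tapp S.phi Y) y = -(S.phi y (covDer Γ S.phi S.xi Y y)) := by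
  -- T = tapp φ (tapp φ Y) = (-1) • Y + (etaf Y) • ξ
  have hT : tapp S.phi (tapp S.phi Y) =
      (fun z => (-1:ℝ) • Y z) + (fun z => S.etaf Y z • S.xi z) := by
    funext z
    simp only [tapp, Pi.add_apply, ACMS.etaf]
    rw [S.phi_sq]
    module
  have hD : Γ.D S.xi (S.etaf Y) = fun z => S.eta z (Γ.nabla S.xi Y z) := by
    have he : S.etaf Y = fun z => Γ.g z (S.xi z) (Y z) := by
      funext z; rw [ACMS.etaf, g_xi]
    rw [he, Γ.metric_compat S.xi S.xi Y]
    funext z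
    rw [nabla_xi_xi S hNS, g_xi]
    simp
  have h1 : Γ.nabla S.xi (tapp S.phi (tapp S.phi Y)) =
      fun z => (-1:ℝ) • Γ.nabla S.xi Y z + S.eta z (Γ.nabla S.xi Y z) • S.xi z := by
    rw [hT, Γ.nabla_add_right]
    funext z
    rw [Pi.add_apply, nabla_smul_const, Γ.nabla_leibniz S.xi (S.etaf Y) S.xi]
    simp only [hD, nabla_xi_xi S hNS, smul_zero, add_zero]
  simp only [covDer, map_sub]
  rw [h1]
  have h2 := S.phi_sq y (Γ.nabla S.xi Y y)
  -- φ²(∇) = -∇ + η(∇)•ξ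
  rw [h2]
  module

private lemma nabla_X_xi (X : M → V) (y : M) :
    Γ.nabla X S.xi y = -(S.phi y (X y)) - S.phi y (covDer Γ S.phi S.xi X y) := by
  have h := hNS X S.xi y
  rw [covDer_into_xi] at h
  have hgξ : Γ.g y (X y) (S.xi y) = S.eta y (X y) := by rw [Γ.g_symm, g_xi]
  rw [hgξ, S.eta_xi] at h
  -- h : -(φ(∇Xξ)) + covDer ξ X = (2*η(X))•ξ - η(X)•ξ - 1•X
  have hiso : covDer Γ S.phi S.xi X y
      = (2 * S.eta y (X y)) • S.xi y - S.eta y (X y) • S.xi y - (1:ℝ) • X y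
        + S.phi y (Γ.nabla X S.xi y) := by
    have := h
    linear_combination (norm := module) this
  have h2 := congrArg (S.phi y) hiso
  rw [map_add, map_sub, map_sub, map_smul, map_smul, map_smul, phi_xi_zero] at h2
  have h3 := S.phi_sq y (Γ.nabla X S.xi y)
  rw [h3, eta_nabla_xi, zero_smul, add_zero] at h2
  -- h2 : φ(covDer ξ X) = 2η•0 - η•0 - 1•φX + (-(∇Xξ))
  have := h2
  linear_combination (norm := module) this

end NSgeo2
section NSpt
open RGeo

variable {M V : Type} [AddCommGroup V] [Module ℝ V] {Γ : RGeo M V} (S : ACMS Γ) (x : M)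

/-- The operator `u ↦ ∇_{cst u} ξ` at the point `x`, as a linear map. -/
private noncomputable def Alin : V →ₗ[ℝ] V where
  toFun u := Γ.nabla (cst M u) S.xi x
  map_add' u v := by
    show Γ.nabla (cst M (u + v)) S.xi x = Γ.nabla (cst M u) S.xi x + Γ.nabla (cst M v) S.xi x
    have h : cst M (u + v) = cst M u + cst M v := rfl
    rw [h, Γ.nabla_add_left]
    rfl
  map_smul' c u := by
    show Γ.nabla (cst M (c • u)) S.xi x = c • Γ.nabla (cst M u) S.xi x
    have h : cst M (c • u) = fun z => c • (cst M u) z := rfl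
    rw [h, Γ.nabla_smul_left (fun _ => c) (cst M u) S.xi]

private lemma Alin_apply (u : V) : Alin S x u = Γ.nabla (cst M u) S.xi x := rfl

/-- The value of `dη` at `x` as a bilinear form. -/
private noncomputable def Blin : V →ₗ[ℝ] V →ₗ[ℝ] ℝ :=
  LinearMap.mk₂ ℝ (fun u w => Γ.g x (Alin S x u) w - Γ.g x (Alin S x w) u)
    (fun u₁ u₂ w => by simp [map_add, LinearMap.add_apply]; ring)
    (fun c u w => by simp [map_smul, LinearMap.smul_apply, smul_eq_mul]; ring)
    (fun u w₁ w₂ => by simp [map_add, LinearMap.add_apply]; ring)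
    (fun c u w => by simp [map_smul, LinearMap.smul_apply, smul_eq_mul]; ring)

private lemma Blin_apply (u w : V) :
    Blin S x u w = Γ.g x (Alin S x u) w - Γ.g x (Alin S x w) u := rfl

private lemma Blin_alt (u : V) : Blin S x u u = 0 := sub_self _

private lemma Blin_skew (u w : V) : Blin S x u w = -(Blin S x w u) := by
  rw [Blin_apply, Blin_apply]; ring

private lemma eta_Alin (u : V) : S.eta x (Alin S x u) = 0 := eta_nabla_xi S (cst M u) x

/-- `dOne` on constant vector fields computes `B`. -/
private lemma dOne_eq_Blin (u w : V) :
    dOne Γ S.etaf (cst M u) (cst M w) x = Blin S x u w := by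
  have hfun : ∀ a : V, S.etaf (cst M a) = fun z => Γ.g z (S.xi z) ((cst M a) z) := by
    intro a; funext z; rw [ACMS.etaf, g_xi]
  have hD : ∀ a b : V, Γ.D (cst M a) (S.etaf (cst M b)) x
      = Γ.g x (Alin S x a) b + S.eta x (Γ.nabla (cst M a) (cst M b) x) := by
    intro a b
    rw [hfun b, Γ.metric_compat (cst M a) S.xi (cst M b)]
    show Γ.g x (Γ.nabla (cst M a) S.xi x) ((cst M b) x)
        + Γ.g x (S.xi x) (Γ.nabla (cst M a) (cst M b) x) = _
    rw [g_xi, Alin_apply]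
    rfl
  have hlie : Γ.lie (cst M u) (cst M w) x
      = Γ.nabla (cst M u) (cst M w) x - Γ.nabla (cst M w) (cst M u) x :=
    (congrFun (Γ.torsion_free (cst M u) (cst M w)) x).symm
  simp only [dOne, Pi.sub_apply]
  rw [hD u w, hD w u]
  have hetalie : S.etaf (Γ.lie (cst M u) (cst M w)) x
      = S.eta x (Γ.nabla (cst M u) (cst M w) x) - S.eta x (Γ.nabla (cst M w) (cst M u) x) := by
    rw [ACMS.etaf, hlie, map_sub]
  rw [hetalie, Blin_apply]
  ring

private lemma g_Cu_u (u : V) : Γ.g x u (covDer Γ S.phi S.xi (cst M u) x) = 0 := by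
  have h := covDer_skew S S.xi (cst M u) (cst M u) x
  have h6 : (cst M u) x = u := rfl
  rw [h6] at h
  have := Γ.g_symm x (covDer Γ S.phi S.xi (cst M u) x) u
  linarith

private lemma g_nonneg (v : V) : 0 ≤ Γ.g x v v := by
  by_cases h : v = 0
  · simp [h]
  · exact le_of_lt (Γ.g_posdef x v h)

variable (hNS : S.IsNearlySasakian)
include hNS

private lemma Alin_eq (u : V) :
    Alin S x u = -(S.phi x u) - S.phi x (covDer Γ S.phi S.xi (cst M u) x) := by
  rw [Alin_apply]
  have h := nabla_X_xi S hNS (cst M u) x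
  simpa [cst] using h

private lemma key_CC (u w : V) :
    Γ.g x (covDer Γ S.phi S.xi (cst M u) x) (S.phi x w)
      + Γ.g x (S.phi x u) (covDer Γ S.phi S.xi (cst M w) x) = 0 := by
  have h1 := covDer_skew S S.xi (cst M u) (tapp S.phi (cst M w)) x
  have h2 := covDer_xi_phi S hNS (cst M w) x
  rw [h2] at h1
  have h3 : tapp S.phi (cst M w) x = S.phi x w := rfl
  rw [h3] at h1
  have h4 : Γ.g x ((cst M u) x) (-(S.phi x (covDer Γ S.phi S.xi (cst M w) x)))
      = -(Γ.g x u (S.phi x (covDer Γ S.phi S.xi (cst M w) x))) := by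
    simp [cst]
  rw [h4] at h1
  have h5 := phi_skew S x u (covDer Γ S.phi S.xi (cst M w) x)
  linarith

private lemma Alin_skew (u w : V) :
    Γ.g x (Alin S x u) w + Γ.g x (Alin S x w) u = 0 := by
  rw [Alin_eq S x hNS u, Alin_eq S x hNS w]
  set Cu := covDer Γ S.phi S.xi (cst M u) x
  set Cw := covDer Γ S.phi S.xi (cst M w) x
  simp only [map_sub, map_neg, LinearMap.sub_apply, LinearMap.neg_apply]
  have k1 := key_CC S x hNS u w
  have s1 := phi_skew S x u w
  have s2 := phi_skew S x w u
  have s3 := phi_skew S x Cu w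
  have s4 := phi_skew S x Cw u
  have g1 := Γ.g_symm x u (S.phi x w)
  have g2 := Γ.g_symm x (S.phi x u) Cw
  have g3 := Γ.g_symm x Cu (S.phi x w)
  have g4 := Γ.g_symm x u Cw
  linarith

private lemma Alin_pos (u : V) (hu : S.eta x u = 0) (hu0 : u ≠ 0) :
    0 < Γ.g x (Alin S x u) (Alin S x u) := by
  rw [Alin_eq S x hNS u]
  set Cu := covDer Γ S.phi S.xi (cst M u) x
  have hexp : Γ.g x (-(S.phi x u) - S.phi x Cu) (-(S.phi x u) - S.phi x Cu)
      = Γ.g x (S.phi x u) (S.phi x u) + Γ.g x (S.phi x u) (S.phi x Cu)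
        + Γ.g x (S.phi x Cu) (S.phi x u) + Γ.g x (S.phi x Cu) (S.phi x Cu) := by
    simp only [map_sub, map_neg, LinearMap.sub_apply, LinearMap.neg_apply]
    ring
  rw [hexp]
  have m1 := S.metric_phi x u u
  have m2 := S.metric_phi x u Cu
  have m3 := S.metric_phi x Cu u
  have hC := g_Cu_u S x u
  have hC' : Γ.g x Cu u = 0 := by
    rw [Γ.g_symm]; exact hC
  have hpos := Γ.g_posdef x u hu0
  have hnn := g_nonneg (Γ := Γ) x (S.phi x Cu)
  rw [hu] at m1 m2 m3
  simp only [mul_zero, zero_mul, sub_zero] at m1 m2 m3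
  rw [m1, m2, m3, hC, hC']
  linarith

private lemma Blin_nondeg (u : V) (hu : S.eta x u = 0) (hu0 : u ≠ 0) :
    0 < Blin S x u (Alin S x u) := by
  rw [Blin_apply]
  have h := Alin_skew S x hNS (Alin S x u) u
  have hpos := Alin_pos S x hNS u hu hu0
  linarith

end NSpt
section Symp

variable {V : Type} [AddCommGroup V] [Module ℝ V] [FiniteDimensional ℝ V]

private lemma symp_skew (B : V →ₗ[ℝ] V →ₗ[ℝ] ℝ) (hAlt : ∀ v, B v v = 0) (u w : V) :
    B u w = -(B w u) := by
  have h := hAlt (u + w)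
  simp only [map_add, LinearMap.add_apply] at h
  rw [hAlt u, hAlt w] at h
  linarith

private lemma symp_basis (B : V →ₗ[ℝ] V →ₗ[ℝ] ℝ) (hAlt : ∀ v, B v v = 0) :
    ∀ (m : ℕ) (W : Submodule ℝ V), Module.finrank ℝ W = 2*m →
    (∀ u ∈ W, u ≠ 0 → ∃ w ∈ W, B u w ≠ 0) →
    ∃ e f : Fin m → V, (∀ i, e i ∈ W) ∧ (∀ i, f i ∈ W) ∧ (∀ i, B (e i) (f i) = 1) ∧
      (∀ i j, i ≠ j → B (e i) (e j) = 0 ∧ B (e i) (f j) = 0 ∧ B (f i) (e j) = 0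
        ∧ B (f i) (f j) = 0) := by
  intro m
  induction m with
  | zero =>
    intro W _ _
    exact ⟨fun i => i.elim0, fun i => i.elim0, fun i => i.elim0, fun i => i.elim0,
      fun i => i.elim0, fun i => i.elim0⟩
  | succ m IH =>
    intro W hrk hnd
    have hWne : W ≠ ⊥ := by
      intro h
      rw [h] at hrk
      simp [finrank_bot] at hrk
    obtain ⟨u, huW, hu0⟩ := (Submodule.ne_bot_iff W).mp hWne
    obtain ⟨w, hwW, hBuw⟩ := hnd u huW hu0
    have hBwu : B w u = -(B u w) := symp_skew B hAlt w u
    set L : V →ₗ[ℝ] ℝ × ℝ := (B u).prod (B w) with hL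
    set Lw : W →ₗ[ℝ] ℝ × ℝ := L.comp W.subtype with hLw
    have hLw_apply : ∀ z : W, Lw z = (B u z, B w z) := fun z => rfl
    have hrange : LinearMap.range Lw = ⊤ := by
      rw [eq_top_iff]
      rintro ⟨a, b⟩ -
      refine ⟨(a/(B u w)) • ⟨w, hwW⟩ + (-(b/(B u w))) • ⟨u, huW⟩, ?_⟩
      rw [map_add, map_smul, map_smul, hLw_apply, hLw_apply]
      have : B u w ≠ 0 := hBuw
      rw [Prod.ext_iff]
      have hne : B u w ≠ 0 := hBuw
      constructor
      · show a / B u w * B u w + -(b / B u w) * B u u = a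
        rw [hAlt u]
        field_simp
        ring
      · show a / B u w * B w w + -(b / B u w) * B w u = b
        rw [hAlt w, hBwu]
        field_simp
        ring
    have hkerrank : Module.finrank ℝ (LinearMap.ker Lw) = 2*m := by
      have h := LinearMap.finrank_range_add_finrank_ker Lw
      rw [hrange, finrank_top, Module.finrank_prod, Module.finrank_self] at h
      omega
    set W' : Submodule ℝ V := (LinearMap.ker Lw).map W.subtype with hW'
    have hW'rank : Module.finrank ℝ W' = 2*m := by
      rw [hW', Submodule.finrank_map_subtype_eq]
      exact hkerrank
    have hW'mem : ∀ z, z ∈ W' ↔ (z ∈ W ∧ B u z = 0 ∧ B w z = 0) := by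
      intro z
      constructor
      · rintro ⟨⟨z', hz'W⟩, hz'ker, rfl⟩
        have h0 : Lw ⟨z', hz'W⟩ = 0 := hz'ker
        rw [hLw_apply, Prod.ext_iff] at h0
        exact ⟨hz'W, by simpa using h0.1, by simpa using h0.2⟩
      · rintro ⟨hzW, h1, h2⟩
        refine ⟨⟨z, hzW⟩, ?_, rfl⟩
        show Lw ⟨z, hzW⟩ = 0
        rw [hLw_apply]
        simp [Prod.ext_iff, h1, h2]
    have hnd' : ∀ z ∈ W', z ≠ 0 → ∃ w' ∈ W', B z w' ≠ 0 := by
      intro z hz hz0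
      obtain ⟨hzW, hz1, hz2⟩ := (hW'mem z).mp hz
      obtain ⟨w₂, hw₂W, hBzw₂⟩ := hnd z hzW hz0
      refine ⟨w₂ - (B u w₂/(B u w)) • w + (B w w₂/(B u w)) • u, ?_, ?_⟩
      · rw [hW'mem]
        refine ⟨by exact Submodule.add_mem W (Submodule.sub_mem W hw₂W
            (Submodule.smul_mem W _ hwW)) (Submodule.smul_mem W _ huW), ?_, ?_⟩
        · simp only [map_add, map_sub, map_smul, smul_eq_mul, LinearMap.add_apply,
            LinearMap.sub_apply, LinearMap.smul_apply]
          rw [hAlt u]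
          field_simp
          ring
        · simp only [map_add, map_sub, map_smul, smul_eq_mul, LinearMap.add_apply,
            LinearMap.sub_apply, LinearMap.smul_apply]
          rw [hAlt w, hBwu]
          field_simp
          ring
      · have e1 : B z w = 0 := by rw [symp_skew B hAlt z w, hz2]; ring
        have e2 : B z u = 0 := by rw [symp_skew B hAlt z u, hz1]; ring
        simp only [map_add, map_sub, map_smul, smul_eq_mul, LinearMap.add_apply,
          LinearMap.sub_apply, LinearMap.smul_apply]
        rw [e1, e2]
        simpa using hBzw₂
    obtain ⟨e, f, he, hf, hBef, hcross⟩ := IH W' hW'rank hnd'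
    have hW'le : ∀ z ∈ W', z ∈ W := fun z hz => ((hW'mem z).mp hz).1
    -- new pair
    set u' := u with hu'
    set w' := (B u w)⁻¹ • w with hw'
    have hBuw' : B u' w' = 1 := by
      rw [hw', map_smul, smul_eq_mul, inv_mul_cancel₀ hBuw]
    have hW'u : ∀ z ∈ W', B u' z = 0 ∧ B z u' = 0 ∧ B w' z = 0 ∧ B z w' = 0 := by
      intro z hz
      obtain ⟨_, h1, h2⟩ := (hW'mem z).mp hz
      refine ⟨h1, by rw [symp_skew B hAlt z u', h1]; ring, ?_, ?_⟩
      · rw [hw', map_smul]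
        simp [h2]
      · rw [hw', map_smul, smul_eq_mul, symp_skew B hAlt z w, h2]
        ring
    refine ⟨Fin.snoc e u', Fin.snoc f w', ?_, ?_, ?_, ?_⟩
    · intro i
      refine Fin.lastCases ?_ ?_ i
      · rw [Fin.snoc_last]; exact huW
      · intro j; rw [Fin.snoc_castSucc]; exact hW'le _ (he j)
    · intro i
      refine Fin.lastCases ?_ ?_ i
      · rw [Fin.snoc_last, hw']; exact Submodule.smul_mem W _ hwW
      · intro j; rw [Fin.snoc_castSucc]; exact hW'le _ (hf j)
    · intro i
      refine Fin.lastCases ?_ ?_ i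
      · rw [Fin.snoc_last, Fin.snoc_last]; exact hBuw'
      · intro j; rw [Fin.snoc_castSucc, Fin.snoc_castSucc]; exact hBef j
    · intro i j hij
      revert hij
      refine Fin.lastCases ?_ ?_ i
      · refine Fin.lastCases ?_ ?_ j
        · intro h; exact absurd rfl h
        · intro j' _
          simp only [Fin.snoc_last, Fin.snoc_castSucc]
          obtain ⟨a1, a2, a3, a4⟩ := hW'u (e j') (he j')
          obtain ⟨b1, b2, b3, b4⟩ := hW'u (f j') (hf j')
          exact ⟨a1, b1, a3, b3⟩
      · intro i'
        refine Fin.lastCases ?_ ?_ j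
        · intro _
          simp only [Fin.snoc_last, Fin.snoc_castSucc]
          obtain ⟨a1, a2, a3, a4⟩ := hW'u (e i') (he i')
          obtain ⟨b1, b2, b3, b4⟩ := hW'u (f i') (hf i')
          exact ⟨a2, a4, b2, b4⟩
        · intro j' hij
          simp only [Fin.snoc_castSucc]
          exact hcross i' j' (fun h => hij (by rw [h]))

end Symp
section Comb

variable {n : ℕ}

private def pidx (i : Fin n) : Fin (2*n+1) := ⟨2*(i:ℕ)+1, by have := i.isLt; omega⟩
private def qidx (i : Fin n) : Fin (2*n+1) := ⟨2*(i:ℕ)+2, by have := i.isLt; omega⟩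
private def zidx : Fin (2*n+1) := ⟨0, by omega⟩

private lemma pidx_val (i : Fin n) : (pidx i : ℕ) = 2*(i:ℕ)+1 := rfl
private lemma qidx_val (i : Fin n) : (qidx i : ℕ) = 2*(i:ℕ)+2 := rfl

private lemma pidx_ne_zidx (i : Fin n) : pidx i ≠ zidx := by
  intro h; have := congrArg Fin.val h; simp [pidx, zidx] at this
private lemma qidx_ne_zidx (i : Fin n) : qidx i ≠ zidx := by
  intro h; have := congrArg Fin.val h; simp [qidx, zidx] at this
private lemma pidx_ne_qidx (i j : Fin n) : pidx i ≠ qidx j := by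
  intro h; have := congrArg Fin.val h; simp [pidx, qidx] at this; omega
private lemma pidx_injective : Function.Injective (pidx (n := n)) := by
  intro i j h; have := congrArg Fin.val h; simp [pidx] at this
  exact Fin.ext (by omega)
private lemma qidx_injective : Function.Injective (qidx (n := n)) := by
  intro i j h; have := congrArg Fin.val h; simp [qidx] at this
  exact Fin.ext (by omega)

private lemma idx_cases (a : Fin (2*n+1)) :
    a = zidx ∨ (∃ i, a = pidx i) ∨ (∃ i, a = qidx i) := by
  obtain ⟨v, hv⟩ := a
  by_cases h0 : v = 0
  · left; exact Fin.ext (by simp [zidx, h0])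
  · by_cases h1 : v % 2 = 1
    · right; left
      exact ⟨⟨(v-1)/2, by omega⟩, Fin.ext (by simp [pidx]; omega)⟩
    · right; right
      exact ⟨⟨(v-2)/2, by omega⟩, Fin.ext (by simp [qidx]; omega)⟩

/-- The block permutation induced by a permutation of the pairs. -/
private def blockFun (π : Fin n → Fin n) (a : Fin (2*n+1)) : Fin (2*n+1) :=
  if h0 : (a:ℕ) = 0 then a
  else if h1 : (a:ℕ) % 2 = 1 then pidx (π ⟨((a:ℕ)-1)/2, by have := a.isLt; omega⟩)
  else qidx (π ⟨((a:ℕ)-2)/2, by have := a.isLt; omega⟩)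

private lemma blockFun_zidx (π : Fin n → Fin n) : blockFun π zidx = zidx := by
  simp [blockFun, zidx]

private lemma blockFun_pidx (π : Fin n → Fin n) (i : Fin n) :
    blockFun π (pidx i) = pidx (π i) := by
  have h0 : ((pidx i : Fin (2*n+1)) : ℕ) ≠ 0 := by rw [pidx_val]; omega
  have h1 : ((pidx i : Fin (2*n+1)) : ℕ) % 2 = 1 := by rw [pidx_val]; omega
  rw [blockFun, dif_neg h0, dif_pos h1]
  congr 2
  exact Fin.ext (by simp only [pidx_val]; omega)

private lemma blockFun_qidx (π : Fin n → Fin n) (i : Fin n) :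
    blockFun π (qidx i) = qidx (π i) := by
  have h0 : ((qidx i : Fin (2*n+1)) : ℕ) ≠ 0 := by rw [qidx_val]; omega
  have h1 : ¬ (((qidx i : Fin (2*n+1)) : ℕ) % 2 = 1) := by rw [qidx_val]; omega
  rw [blockFun, dif_neg h0, dif_neg h1]
  congr 2
  exact Fin.ext (by simp only [qidx_val]; omega)

private def blockPerm (π : Equiv.Perm (Fin n)) : Equiv.Perm (Fin (2*n+1)) where
  toFun := blockFun π
  invFun := blockFun π.symm
  left_inv a := by
    rcases idx_cases a with h | ⟨i, h⟩ | ⟨i, h⟩ <;> subst h <;>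
      simp [blockFun_zidx, blockFun_pidx, blockFun_qidx]
  right_inv a := by
    rcases idx_cases a with h | ⟨i, h⟩ | ⟨i, h⟩ <;> subst h <;>
      simp [blockFun_zidx, blockFun_pidx, blockFun_qidx]

private lemma blockPerm_zidx (π : Equiv.Perm (Fin n)) : blockPerm π zidx = zidx :=
  blockFun_zidx π
private lemma blockPerm_pidx (π : Equiv.Perm (Fin n)) (i : Fin n) :
    blockPerm π (pidx i) = pidx (π i) := blockFun_pidx π i
private lemma blockPerm_qidx (π : Equiv.Perm (Fin n)) (i : Fin n) :
    blockPerm π (qidx i) = qidx (π i) := blockFun_qidx π i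

private lemma blockPerm_mul (π₁ π₂ : Equiv.Perm (Fin n)) :
    blockPerm (π₁ * π₂) = blockPerm π₁ * blockPerm π₂ := by
  apply Equiv.ext
  intro a
  rcases idx_cases a with h | ⟨i, h⟩ | ⟨i, h⟩ <;> subst h <;>
    simp [Equiv.Perm.mul_apply, blockPerm_zidx, blockPerm_pidx, blockPerm_qidx]

private lemma blockPerm_one : blockPerm (1 : Equiv.Perm (Fin n)) = 1 := by
  apply Equiv.ext
  intro a
  rcases idx_cases a with h | ⟨i, h⟩ | ⟨i, h⟩ <;> subst h <;>
    simp [blockPerm_zidx, blockPerm_pidx, blockPerm_qidx]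

private lemma blockPerm_swap (a b : Fin n) (hab : a ≠ b) :
    blockPerm (Equiv.swap a b) =
      Equiv.swap (pidx a) (pidx b) * Equiv.swap (qidx a) (qidx b) := by
  apply Equiv.ext
  intro c
  rcases idx_cases c with h | ⟨i, h⟩ | ⟨i, h⟩ <;> subst h
  · rw [blockPerm_zidx, Equiv.Perm.mul_apply,
      Equiv.swap_apply_of_ne_of_ne (Ne.symm (qidx_ne_zidx a)) (Ne.symm (qidx_ne_zidx b)),
      Equiv.swap_apply_of_ne_of_ne (Ne.symm (pidx_ne_zidx a)) (Ne.symm (pidx_ne_zidx b))]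
  · rw [blockPerm_pidx, Equiv.Perm.mul_apply,
      Equiv.swap_apply_of_ne_of_ne (pidx_ne_qidx i a) (pidx_ne_qidx i b)]
    rcases eq_or_ne i a with rfl | hia
    · rw [Equiv.swap_apply_left, Equiv.swap_apply_left]
    · rcases eq_or_ne i b with rfl | hib
      · rw [Equiv.swap_apply_right, Equiv.swap_apply_right]
      · rw [Equiv.swap_apply_of_ne_of_ne hia hib,
          Equiv.swap_apply_of_ne_of_ne (fun h => hia (pidx_injective h))
            (fun h => hib (pidx_injective h))]
  · rw [blockPerm_qidx, Equiv.Perm.mul_apply]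
    rcases eq_or_ne i a with rfl | hia
    · rw [Equiv.swap_apply_left, Equiv.swap_apply_left,
        Equiv.swap_apply_of_ne_of_ne (Ne.symm (pidx_ne_qidx i b)) (Ne.symm (pidx_ne_qidx b b))]
    · rcases eq_or_ne i b with rfl | hib
      · rw [Equiv.swap_apply_right, Equiv.swap_apply_right,
          Equiv.swap_apply_of_ne_of_ne (Ne.symm (pidx_ne_qidx a a)) (Ne.symm (pidx_ne_qidx i a))]
      · rw [Equiv.swap_apply_of_ne_of_ne hia hib,
          Equiv.swap_apply_of_ne_of_ne (fun h => hia (qidx_injective h))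
            (fun h => hib (qidx_injective h)),
          Equiv.swap_apply_of_ne_of_ne (Ne.symm (pidx_ne_qidx a i)) (Ne.symm (pidx_ne_qidx b i))]

private lemma blockPerm_sign (π : Equiv.Perm (Fin n)) :
    Equiv.Perm.sign (blockPerm π) = 1 := by
  refine Equiv.Perm.swap_induction_on π ?_ ?_
  · rw [blockPerm_one, map_one]
  · intro f x y hxy ih
    rw [blockPerm_mul, map_mul, ih, blockPerm_swap x y hxy, map_mul,
      Equiv.Perm.sign_swap (pidx_injective.ne hxy), Equiv.Perm.sign_swap (qidx_injective.ne hxy)]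
    norm_num

private lemma swap_disjoint (i j : Fin n) (hij : i ≠ j) :
    (Equiv.swap (pidx i) (qidx i)).Disjoint (Equiv.swap (pidx j) (qidx j)) := by
  intro c
  by_cases h : c = pidx i ∨ c = qidx i
  · right
    rcases h with rfl | rfl
    · exact Equiv.swap_apply_of_ne_of_ne (pidx_injective.ne hij) (pidx_ne_qidx i j)
    · exact Equiv.swap_apply_of_ne_of_ne (Ne.symm (pidx_ne_qidx j i)) (qidx_injective.ne hij)
  · left
    push_neg at h
    exact Equiv.swap_apply_of_ne_of_ne h.1 h.2

open scoped Classical in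
private noncomputable def rhoS (S : Finset (Fin n)) : Equiv.Perm (Fin (2*n+1)) :=
  S.noncommProd (fun i => Equiv.swap (pidx i) (qidx i)) (by
    intro i _ j _ hij
    exact ((swap_disjoint i j hij).commute))

private lemma rhoS_empty : rhoS (∅ : Finset (Fin n)) = 1 := Finset.noncommProd_empty _ _

private lemma rhoS_insert (j : Fin n) (S : Finset (Fin n)) (hj : j ∉ S) :
    rhoS (insert j S) = Equiv.swap (pidx j) (qidx j) * rhoS S := by
  classical
  exact Finset.noncommProd_insert_of_notMem _ _ _ _ hj

private lemma rhoS_spec (S : Finset (Fin n)) :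
    (rhoS S zidx = zidx) ∧
    (∀ i, i ∈ S → rhoS S (pidx i) = qidx i ∧ rhoS S (qidx i) = pidx i) ∧
    (∀ i, i ∉ S → rhoS S (pidx i) = pidx i ∧ rhoS S (qidx i) = qidx i) := by
  classical
  induction S using Finset.induction_on with
  | empty =>
    rw [rhoS_empty]
    exact ⟨rfl, fun i hi => absurd hi (by simp), fun i _ => ⟨rfl, rfl⟩⟩
  | @insert j S hj ih =>
    obtain ⟨ih0, ih1, ih2⟩ := ih
    rw [rhoS_insert j S hj]
    refine ⟨?_, ?_, ?_⟩
    · rw [Equiv.Perm.mul_apply, ih0,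
        Equiv.swap_apply_of_ne_of_ne (Ne.symm (pidx_ne_zidx j)) (Ne.symm (qidx_ne_zidx j))]
    · intro i hi
      rcases Finset.mem_insert.mp hi with rfl | hiS
      · obtain ⟨e1, e2⟩ := ih2 i hj
        rw [Equiv.Perm.mul_apply, Equiv.Perm.mul_apply, e1, e2,
          Equiv.swap_apply_left, Equiv.swap_apply_right]
        exact ⟨rfl, rfl⟩
      · have hij : i ≠ j := fun h => hj (h ▸ hiS)
        obtain ⟨e1, e2⟩ := ih1 i hiS
        rw [Equiv.Perm.mul_apply, Equiv.Perm.mul_apply, e1, e2,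
          Equiv.swap_apply_of_ne_of_ne (Ne.symm (pidx_ne_qidx j i)) (qidx_injective.ne hij),
          Equiv.swap_apply_of_ne_of_ne (pidx_injective.ne hij) (pidx_ne_qidx i j)]
        exact ⟨rfl, rfl⟩
    · intro i hi
      have hij : i ≠ j := fun h => hi (by rw [h]; exact Finset.mem_insert_self j S)
      have hiS : i ∉ S := fun h => hi (Finset.mem_insert_of_mem h)
      obtain ⟨e1, e2⟩ := ih2 i hiS
      rw [Equiv.Perm.mul_apply, Equiv.Perm.mul_apply, e1, e2,
        Equiv.swap_apply_of_ne_of_ne (pidx_injective.ne hij) (pidx_ne_qidx i j),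
        Equiv.swap_apply_of_ne_of_ne (Ne.symm (pidx_ne_qidx j i)) (qidx_injective.ne hij)]
      exact ⟨rfl, rfl⟩

private lemma rhoS_sign (S : Finset (Fin n)) :
    Equiv.Perm.sign (rhoS S) = (-1) ^ S.card := by
  classical
  induction S using Finset.induction_on with
  | empty => rw [rhoS_empty, map_one, Finset.card_empty, pow_zero]
  | @insert j S hj ih =>
    rw [rhoS_insert j S hj, map_mul, ih, Equiv.Perm.sign_swap (pidx_ne_qidx j j),
      Finset.card_insert_of_notMem hj, pow_succ]
    exact (mul_comm _ _)

end Comb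
section Vsel

variable {V : Type} {n : ℕ}

private def vsel (xiv : V) (e f : Fin n → V) (a : Fin (2*n+1)) : V :=
  if _h0 : (a:ℕ) = 0 then xiv
  else if _h1 : (a:ℕ) % 2 = 1 then e ⟨((a:ℕ)-1)/2, by have := a.isLt; omega⟩
  else f ⟨((a:ℕ)-2)/2, by have := a.isLt; omega⟩

private lemma vsel_zidx (xiv : V) (e f : Fin n → V) : vsel xiv e f zidx = xiv := by
  rw [vsel, dif_pos (show ((zidx : Fin (2*n+1)) : ℕ) = 0 from rfl)]

private lemma vsel_pidx (xiv : V) (e f : Fin n → V) (i : Fin n) :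
    vsel xiv e f (pidx i) = e i := by
  have h0 : ((pidx i : Fin (2*n+1)) : ℕ) ≠ 0 := by rw [pidx_val]; omega
  have h1 : ((pidx i : Fin (2*n+1)) : ℕ) % 2 = 1 := by rw [pidx_val]; omega
  rw [vsel, dif_neg h0, dif_pos h1]
  congr 1
  exact Fin.ext (by simp only [pidx_val]; omega)

private lemma vsel_qidx (xiv : V) (e f : Fin n → V) (i : Fin n) :
    vsel xiv e f (qidx i) = f i := by
  have h0 : ((qidx i : Fin (2*n+1)) : ℕ) ≠ 0 := by rw [qidx_val]; omega
  have h1 : ¬ (((qidx i : Fin (2*n+1)) : ℕ) % 2 = 1) := by rw [qidx_val]; omega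
  rw [vsel, dif_neg h0, dif_neg h1]
  congr 1
  exact Fin.ext (by simp only [qidx_val]; omega)

end Vsel

open RGeo in
/-- Corollary.  On a `(2n+1)`-dimensional nearly Sasakian
manifold, `η ∧ (dη)ⁿ` is nowhere vanishing (here written via the full
antisymmetrisation, a positive multiple of `η ∧ (dη)ⁿ`): `η` is a contact
form. -/
theorem nearlySasakian_is_contact {M V : Type} [AddCommGroup V] [Module ℝ V]
    [FiniteDimensional ℝ V]
    (Γ : RGeo M V) (S : ACMS Γ) (n : ℕ)
    (hdim : Module.finrank ℝ V = 2 * n + 1)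
    (hNS : S.IsNearlySasakian) :
    ∀ x : M, ∃ v : Fin (2 * n + 1) → V,
      (∑ σ : Equiv.Perm (Fin (2 * n + 1)),
        ((Equiv.Perm.sign σ : ℤ) : ℝ) *
          (S.eta x (v (σ ⟨0, by omega⟩)) *
            ∏ i : Fin n,
              dOne Γ S.etaf
                (cst M (v (σ ⟨2 * (i : ℕ) + 1, by have := i.isLt; omega⟩)))
                (cst M (v (σ ⟨2 * (i : ℕ) + 2, by have := i.isLt; omega⟩))) x)) ≠ 0 := by
  intro x
  classical
  -- the kernel of η at x
  have hKrank : Module.finrank ℝ (LinearMap.ker (S.eta x)) = 2*n := by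
    have hsur : LinearMap.range (S.eta x) = ⊤ := by
      rw [eq_top_iff]
      intro c _
      exact ⟨c • S.xi x, by rw [map_smul, S.eta_xi, smul_eq_mul, mul_one]⟩
    have h := LinearMap.finrank_range_add_finrank_ker (S.eta x)
    rw [hsur, finrank_top, Module.finrank_self, hdim] at h
    omega
  have hAlt : ∀ u : V, Blin S x u u = 0 := Blin_alt S x
  have hnd : ∀ u ∈ LinearMap.ker (S.eta x), u ≠ 0 →
      ∃ w ∈ LinearMap.ker (S.eta x), Blin S x u w ≠ 0 := by
    intro u hu hu0
    refine ⟨Alin S x u, LinearMap.mem_ker.mpr (eta_Alin S x u), ?_⟩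
    exact ne_of_gt (Blin_nondeg S x hNS u (LinearMap.mem_ker.mp hu) hu0)
  obtain ⟨e, f, heK, hfK, hBef, hcross⟩ := symp_basis (Blin S x) hAlt n (LinearMap.ker (S.eta x)) hKrank hnd
  set v : Fin (2*n+1) → V := vsel (S.xi x) e f with hv
  refine ⟨v, ?_⟩
  have hvz : v zidx = S.xi x := vsel_zidx _ _ _
  have hvp : ∀ i, v (pidx i) = e i := vsel_pidx _ _ _
  have hvq : ∀ i, v (qidx i) = f i := vsel_qidx _ _ _
  have hetaz : S.eta x (v zidx) = 1 := by rw [hvz, S.eta_xi]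
  have hetaNZ : ∀ a, a ≠ zidx → S.eta x (v a) = 0 := by
    intro a ha
    rcases idx_cases a with rfl | ⟨i, rfl⟩ | ⟨i, rfl⟩
    · exact absurd rfl ha
    · rw [hvp i]; exact LinearMap.mem_ker.mp (heK i)
    · rw [hvq i]; exact LinearMap.mem_ker.mp (hfK i)
  -- classification of nonzero B values
  have hclass : ∀ a b : Fin (2*n+1), a ≠ zidx → b ≠ zidx → Blin S x (v a) (v b) ≠ 0 →
      ∃ j, (a = pidx j ∧ b = qidx j) ∨ (a = qidx j ∧ b = pidx j) := by
    intro a b ha hb hB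
    rcases idx_cases a with rfl | ⟨i, rfl⟩ | ⟨i, rfl⟩
    · exact absurd rfl ha
    · rcases idx_cases b with rfl | ⟨j, rfl⟩ | ⟨j, rfl⟩
      · exact absurd rfl hb
      · exfalso; apply hB
        rcases eq_or_ne i j with rfl | hij
        · rw [hvp i]; exact hAlt (e i)
        · rw [hvp i, hvp j]; exact (hcross i j hij).1
      · rcases eq_or_ne i j with rfl | hij
        · exact ⟨i, Or.inl ⟨rfl, rfl⟩⟩
        · exfalso; apply hB; rw [hvp i, hvq j]; exact (hcross i j hij).2.1
    · rcases idx_cases b with rfl | ⟨j, rfl⟩ | ⟨j, rfl⟩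
      · exact absurd rfl hb
      · rcases eq_or_ne i j with rfl | hij
        · exact ⟨i, Or.inr ⟨rfl, rfl⟩⟩
        · exfalso; apply hB; rw [hvq i, hvp j]; exact (hcross i j hij).2.2.1
      · exfalso; apply hB
        rcases eq_or_ne i j with rfl | hij
        · rw [hvq i]; exact hAlt (f i)
        · rw [hvq i, hvq j]; exact (hcross i j hij).2.2.2
  show (∑ σ : Equiv.Perm (Fin (2*n+1)),
      ((Equiv.Perm.sign σ : ℤ) : ℝ) *
        (S.eta x (v (σ zidx)) *
          ∏ i : Fin n,
            dOne Γ S.etaf (cst M (v (σ (pidx i)))) (cst M (v (σ (qidx i)))) x)) ≠ 0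
  simp only [dOne_eq_Blin S x]
  apply ne_of_gt
  apply Finset.sum_pos'
  · intro σ _
    by_cases h0 : σ zidx = zidx
    · by_cases hzero : ∃ i, Blin S x (v (σ (pidx i))) (v (σ (qidx i))) = 0
      · obtain ⟨i, hi⟩ := hzero
        rw [Finset.prod_eq_zero (Finset.mem_univ i) hi, mul_zero, mul_zero]
      · push_neg at hzero
        have hσp : ∀ i, σ (pidx i) ≠ zidx := by
          intro i h
          exact pidx_ne_zidx i (σ.injective (h.trans h0.symm))
        have hσq : ∀ i, σ (qidx i) ≠ zidx := by
          intro i h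
          exact qidx_ne_zidx i (σ.injective (h.trans h0.symm))
        have hJex : ∀ i, ∃ j, (σ (pidx i) = pidx j ∧ σ (qidx i) = qidx j)
            ∨ (σ (pidx i) = qidx j ∧ σ (qidx i) = pidx j) := by
          intro i
          obtain ⟨j, hj⟩ := hclass _ _ (hσp i) (hσq i) (hzero i)
          exact ⟨j, hj⟩
        choose J hJ' using hJex
        set Sf : Finset (Fin n) := Finset.univ.filter (fun i => σ (pidx i) = qidx (J i)) with hSf
        have hmem : ∀ i, i ∈ Sf → (σ (pidx i) = qidx (J i) ∧ σ (qidx i) = pidx (J i)) := by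
          intro i hi
          rw [hSf, Finset.mem_filter] at hi
          rcases hJ' i with ⟨h1, h2⟩ | ⟨h1, h2⟩
          · exact absurd (h1.symm.trans hi.2) (pidx_ne_qidx (J i) (J i))
          · exact ⟨h1, h2⟩
        have hnotmem : ∀ i, i ∉ Sf → (σ (pidx i) = pidx (J i) ∧ σ (qidx i) = qidx (J i)) := by
          intro i hi
          rcases hJ' i with h | h
          · exact h
          · exact absurd (by rw [hSf, Finset.mem_filter]; exact ⟨Finset.mem_univ i, h.1⟩) hi
        have hJinj : Function.Injective J := by
          intro i i' h
          by_contra hne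
          rcases hJ' i with ⟨h1, h2⟩ | ⟨h1, h2⟩ <;>
            rcases hJ' i' with ⟨h3, h4⟩ | ⟨h3, h4⟩ <;> rw [h] at h1 h2
          · exact hne (pidx_injective (σ.injective (h1.trans h3.symm)))
          · exact pidx_ne_qidx i i' (σ.injective (h1.trans h4.symm))
          · exact pidx_ne_qidx i i' (σ.injective (h1.trans h4.symm))
          · exact hne (pidx_injective (σ.injective (h1.trans h3.symm)))
        have hJbij := Finite.injective_iff_bijective.mp hJinj
        set Jp : Equiv.Perm (Fin n) := Equiv.ofBijective J hJbij with hJp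
        have hJp_apply : ∀ i, Jp i = J i := fun i => rfl
        have hcomp : σ * rhoS Sf = blockPerm Jp := by
          apply Equiv.ext
          intro a
          obtain ⟨r0, r1, r2⟩ := rhoS_spec Sf
          rcases idx_cases a with rfl | ⟨i, rfl⟩ | ⟨i, rfl⟩
          · rw [Equiv.Perm.mul_apply, r0, h0, blockPerm_zidx]
          · rw [Equiv.Perm.mul_apply, blockPerm_pidx, hJp_apply]
            by_cases hi : i ∈ Sf
            · rw [(r1 i hi).1, (hmem i hi).2]
            · rw [(r2 i hi).1, (hnotmem i hi).1]
          · rw [Equiv.Perm.mul_apply, blockPerm_qidx, hJp_apply]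
            by_cases hi : i ∈ Sf
            · rw [(r1 i hi).2, (hmem i hi).1]
            · rw [(r2 i hi).2, (hnotmem i hi).2]
        have hsign : Equiv.Perm.sign σ = (-1) ^ Sf.card := by
          have h1 : σ = blockPerm Jp * (rhoS Sf)⁻¹ := eq_mul_inv_of_mul_eq hcomp
          rw [h1, map_mul, map_inv, blockPerm_sign, rhoS_sign, one_mul]
          rw [← inv_pow]
          norm_num
        have hsignR : ((Equiv.Perm.sign σ : ℤ) : ℝ) = (-1) ^ Sf.card := by
          rw [hsign]
          push_cast
          ring
        have hprodval : ∀ i, Blin S x (v (σ (pidx i))) (v (σ (qidx i)))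
            = if i ∈ Sf then (-1:ℝ) else 1 := by
          intro i
          by_cases hi : i ∈ Sf
          · obtain ⟨h1, h2⟩ := hmem i hi
            rw [h1, h2, if_pos hi, hvq, hvp, Blin_skew S x (f (J i)) (e (J i)), hBef (J i)]
          · obtain ⟨h1, h2⟩ := hnotmem i hi
            rw [h1, h2, if_neg hi, hvp, hvq]
            exact hBef (J i)
        rw [h0, hetaz, one_mul, Finset.prod_congr rfl (fun i _ => hprodval i),
          Finset.prod_ite_mem, Finset.univ_inter, Finset.prod_const, hsignR, ← pow_add]
        rw [Even.neg_one_pow ⟨Sf.card, rfl⟩]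
        exact zero_le_one
    · rw [hetaNZ _ h0, zero_mul, mul_zero]
  · refine ⟨1, Finset.mem_univ 1, ?_⟩
    simp only [Equiv.Perm.one_apply]
    rw [hetaz, one_mul,
      show (∏ i : Fin n, Blin S x (v (pidx i)) (v (qidx i))) = 1 from
        Finset.prod_eq_one (fun i _ => by rw [hvp i, hvq i]; exact hBef i),
      Equiv.Perm.sign_one]
    norm_num
end
end
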